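/- For α = 1, the Riesz–Caputo derivative D^α f(x) defined with limits reduces to the classical derivative: formally, lim_{α→1⁻} D^α f(x) = f'(x) for f ∈ C¹([a,b]) with f' Hölder continuous, where D^α f(x) = (1/2)Γ(2-α)[ L_A^{α-1}·(1/Γ(1-α))∫_a^x f'(s)(x-s)^{-α} ds + L_B^{α-1}·(1/Γ(1-α))∫_x^b f'(s)(s-x)^{-α} ds ], L_A = x−a, L_B = b−x. -/

import Mathlib

open MeasureTheory intervalIntegral Set Filter

lemma integral_sub_rpow (x L p : ℝ) (hp : -1 < p) :
    ∫ s in (x - L)..x, (x - s) ^ p = L ^ (p + 1) / (p + 1) := by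
  rw [intervalIntegral.integral_comp_sub_left (fun u => u ^ p) x]
  simp only [sub_self, sub_sub_cancel]
  rw [integral_rpow (Or.inl hp), Real.zero_rpow (by linarith)]
  ring

lemma integrable_sub_rpow (x L p : ℝ) (hp : -1 < p) :
    IntervalIntegrable (fun s => (x - s) ^ p) volume (x - L) x := by
  have h := (intervalIntegrable_rpow' (a := 0) (b := L) hp).comp_sub_left x
  simpa using h.symm

lemma left_est (x L α C γ : ℝ) (g : ℝ → ℝ) (hL : 0 < L) (hα : α < 1) (hγ : 0 < γ)
    (hC : 0 ≤ C) (hg : ContinuousOn g (Icc (x - L) x))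
    (hH : ∀ s ∈ Icc (x - L) x, |g s - g x| ≤ C * (x - s) ^ γ) :
    |(∫ s in (x - L)..x, g s / (x - s) ^ α) - g x * L ^ (1 - α) / (1 - α)|
      ≤ C * L ^ (γ + 1 - α) / (γ + 1 - α) := by
  have hcx : x - L ≤ x := by linarith
  have hne : -1 < -α := by linarith
  have hga : -1 < γ - α := by linarith
  have hint1 : IntervalIntegrable (fun s => (x - s) ^ (-α)) volume (x - L) x :=
    integrable_sub_rpow x L (-α) hne
  have hint2 : IntervalIntegrable (fun s => (x - s) ^ (γ - α)) volume (x - L) x :=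
    integrable_sub_rpow x L (γ - α) hga
  have hgc : ContinuousOn (fun s => g s - g x) (uIcc (x - L) x) := by
    rw [uIcc_of_le hcx]; exact hg.sub continuousOn_const
  have hmul : IntervalIntegrable (fun s => (g s - g x) * (x - s) ^ (-α)) volume (x - L) x :=
    hint1.continuousOn_mul hgc
  have hval : ∫ s in (x - L)..x, (x - s) ^ (-α) = L ^ (1 - α) / (1 - α) := by
    have := integral_sub_rpow x L (-α) hne
    rwa [show -α + 1 = 1 - α by ring] at this
  have split : ∫ s in (x - L)..x, g s / (x - s) ^ α
      = (∫ s in (x - L)..x, (g s - g x) * (x - s) ^ (-α)) + g x * L ^ (1 - α) / (1 - α) := by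
    have hcongr : ∫ s in (x - L)..x, g s / (x - s) ^ α
        = ∫ s in (x - L)..x, ((g s - g x) * (x - s) ^ (-α) + g x * (x - s) ^ (-α)) := by
      apply intervalIntegral.integral_congr
      intro s hs
      rw [uIcc_of_le hcx] at hs
      have hxs : 0 ≤ x - s := by linarith [hs.2]
      simp only
      rw [Real.rpow_neg hxs]
      field_simp
      ring
    rw [hcongr, intervalIntegral.integral_add hmul (hint1.const_mul (g x)),
      intervalIntegral.integral_const_mul, hval]
    ring
  rw [split, add_sub_cancel_right]
  have hb : ‖∫ s in (x - L)..x, (g s - g x) * (x - s) ^ (-α)‖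
      ≤ |∫ s in (x - L)..x, C * (x - s) ^ (γ - α)| := by
    apply intervalIntegral.norm_integral_le_abs_of_norm_le _ (hint2.const_mul C)
    filter_upwards [ae_restrict_mem measurableSet_uIoc] with s hs
    rw [uIoc_of_le hcx] at hs
    rcases eq_or_lt_of_le hs.2 with h | h
    · subst h
      simp only [sub_self, abs_zero, norm_mul, Real.norm_eq_abs, sub_self, abs_zero, zero_mul]
      positivity
    · have hxs : 0 < x - s := by linarith
      rw [norm_mul, Real.norm_eq_abs, Real.norm_eq_abs,
        abs_of_nonneg (Real.rpow_nonneg hxs.le _)]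
      calc |g s - g x| * (x - s) ^ (-α)
          ≤ (C * (x - s) ^ γ) * (x - s) ^ (-α) := by
            apply mul_le_mul_of_nonneg_right _ (Real.rpow_nonneg hxs.le _)
            exact hH s ⟨by linarith [hs.1], hs.2⟩
        _ = C * (x - s) ^ (γ - α) := by
            rw [mul_assoc, ← Real.rpow_add hxs]; ring_nf
  have hval2 : ∫ s in (x - L)..x, C * (x - s) ^ (γ - α) = C * (L ^ (γ + 1 - α) / (γ + 1 - α)) := by
    rw [intervalIntegral.integral_const_mul, integral_sub_rpow x L (γ - α) hga,
      show γ - α + 1 = γ + 1 - α by ring]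
  rw [Real.norm_eq_abs] at hb
  calc |∫ s in (x - L)..x, (g s - g x) * (x - s) ^ (-α)| ≤ _ := hb
    _ = C * L ^ (γ + 1 - α) / (γ + 1 - α) := by
        rw [hval2, abs_of_nonneg]
        · ring
        · exact mul_nonneg hC (div_nonneg (Real.rpow_nonneg hL.le _) (by linarith))

lemma holder_continuousOn {S : Set ℝ} {g : ℝ → ℝ} {C γ : ℝ} (hγ : 0 < γ)
    (hH : ∀ s ∈ S, ∀ t ∈ S, |g s - g t| ≤ C * |s - t| ^ γ) :
    ContinuousOn g S := by
  intro s hs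
  rw [ContinuousWithinAt, tendsto_iff_dist_tendsto_zero]
  have h4 : Tendsto (fun t : ℝ => C * |t - s| ^ γ) (nhdsWithin s S) (nhds 0) := by
    have h1 : Tendsto (fun t : ℝ => |t - s|) (nhdsWithin s S) (nhds 0) := by
      have hc : Continuous (fun t : ℝ => |t - s|) :=
        continuous_abs.comp (continuous_id.sub continuous_const)
      have h := hc.tendsto s
      simp only [sub_self, abs_zero] at h
      exact h.mono_left nhdsWithin_le_nhds
    have h2 : ContinuousAt (fun u : ℝ => u ^ γ) 0 :=
      Real.continuousAt_rpow_const 0 γ (Or.inr hγ.le)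
    have h3 := h2.tendsto.comp h1
    rw [Real.zero_rpow hγ.ne'] at h3
    have h5 := h3.const_mul C
    simpa using h5
  refine squeeze_zero' (Eventually.of_forall fun t => dist_nonneg)
    (eventually_of_mem self_mem_nhdsWithin fun t ht => ?_) h4
  rw [Real.dist_eq]
  exact hH t ht s hs

/-- Riesz–Caputo fractional derivative of order `α` on `(a,b)` with
length scales `L_A = x - a`, `L_B = b - x`. -/
noncomputable def rieszCaputo (a b α : ℝ) (f : ℝ → ℝ) (x : ℝ) : ℝ :=
  (1 / 2) * Real.Gamma (2 - α) *
    ((x - a) ^ (α - 1) * ((1 / Real.Gamma (1 - α)) * ∫ s in a..x, deriv f s / (x - s) ^ α) +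
     (b - x) ^ (α - 1) * ((1 / Real.Gamma (1 - α)) * ∫ s in x..b, deriv f s / (s - x) ^ α))

/-- As `α → 1⁻`, the Riesz–Caputo derivative recovers the classical derivative. -/
theorem rieszCaputo_tendsto_deriv (a b x : ℝ) (f : ℝ → ℝ)
    (hax : a < x) (hxb : x < b)
    (hf : ContDiffOn ℝ 1 f (Set.Icc a b))
    (hHolder : ∃ C γ : ℝ, 0 < γ ∧
      ∀ s ∈ Set.Icc a b, ∀ t ∈ Set.Icc a b,
        |deriv f s - deriv f t| ≤ C * |s - t| ^ γ) :
    Tendsto (fun α => rieszCaputo a b α f x) (nhdsWithin 1 (Set.Iio 1))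
      (nhds (deriv f x)) := by
  obtain ⟨C, γ, hγ, hH⟩ := hHolder
  have hab : a < b := hax.trans hxb
  have hxab : x ∈ Icc a b := ⟨hax.le, hxb.le⟩
  have hC : 0 ≤ C := by
    have h := hH a ⟨le_refl a, hab.le⟩ b ⟨hab.le, le_refl b⟩
    have hpos : 0 < |a - b| ^ γ :=
      Real.rpow_pos_of_pos (abs_pos.mpr (sub_ne_zero.mpr hab.ne)) γ
    nlinarith [abs_nonneg (deriv f a - deriv f b)]
  have hgc : ContinuousOn (deriv f) (Icc a b) := holder_continuousOn hγ hH
  have hLA : 0 < x - a := sub_pos.mpr hax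
  have hLB : 0 < b - x := sub_pos.mpr hxb
  set K := C * ((x - a) ^ γ + (b - x) ^ γ) / (2 * γ) with hK
  have key : ∀ α : ℝ, α < 1 → |rieszCaputo a b α f x - deriv f x| ≤ (1 - α) * K := by
    intro α hα
    have h1α : 0 < 1 - α := by linarith
    have hga : 0 < γ + 1 - α := by linarith
    -- left estimate
    have hIA : |(∫ s in a..x, deriv f s / (x - s) ^ α)
        - deriv f x * (x - a) ^ (1 - α) / (1 - α)|
        ≤ C * (x - a) ^ (γ + 1 - α) / (γ + 1 - α) := by
      have h := left_est x (x - a) α C γ (deriv f) hLA hα hγ hC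
        (by rw [show x - (x - a) = a by ring]
            exact hgc.mono (Icc_subset_Icc (le_refl a) hxb.le))
        (by rw [show x - (x - a) = a by ring]
            intro s hs
            have h2 := hH s ⟨hs.1, hs.2.trans hxb.le⟩ x hxab
            have h3 : |s - x| = x - s := by
              rw [abs_sub_comm]; exact abs_of_nonneg (by linarith [hs.2])
            rwa [h3] at h2)
      rwa [show x - (x - a) = a by ring] at h
    -- right estimate via reflection
    have hIB : |(∫ s in x..b, deriv f s / (s - x) ^ α)
        - deriv f x * (b - x) ^ (1 - α) / (1 - α)|
        ≤ C * (b - x) ^ (γ + 1 - α) / (γ + 1 - α) := by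
      have hmaps : ∀ t ∈ Icc (x - (b - x)) x, 2 * x - t ∈ Icc a b := by
        intro t ht
        constructor
        · have := ht.2; linarith
        · have := ht.1; linarith
      have h := left_est x (b - x) α C γ (fun t => deriv f (2 * x - t)) hLB hα hγ hC
        (hgc.comp ((continuous_const.sub continuous_id).continuousOn) hmaps)
        (by intro s hs
            have h2 := hH (2 * x - s) (hmaps s hs) x hxab
            rw [show 2 * x - x = x by ring]
            have h3 : |2 * x - s - x| = x - s := by
              rw [show 2 * x - s - x = x - s by ring]
              exact abs_of_nonneg (by linarith [hs.2])
            rwa [h3] at h2)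
      simp only [show 2 * x - x = x by ring] at h
      have hflip : (∫ t in (x - (b - x))..x, deriv f (2 * x - t) / (x - t) ^ α)
          = ∫ s in x..b, deriv f s / (s - x) ^ α := by
        have hcongr : ∀ t, deriv f (2 * x - t) / (x - t) ^ α
            = (fun s => deriv f s / (s - x) ^ α) (2 * x - t) := by
          intro t
          simp only
          rw [show 2 * x - t - x = x - t by ring]
        calc (∫ t in (x - (b - x))..x, deriv f (2 * x - t) / (x - t) ^ α)
            = ∫ t in (x - (b - x))..x, (fun s => deriv f s / (s - x) ^ α) (2 * x - t) := by
              simp_rw [hcongr]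
          _ = ∫ s in (2 * x - x)..(2 * x - (x - (b - x))), deriv f s / (s - x) ^ α := by
              exact intervalIntegral.integral_comp_sub_left
                (fun s => deriv f s / (s - x) ^ α) (2 * x)
          _ = ∫ s in x..b, deriv f s / (s - x) ^ α := by
              rw [show 2 * x - x = x by ring, show 2 * x - (x - (b - x)) = b by ring]
      rwa [hflip] at h
    -- algebra
    have hΓpos : 0 < Real.Gamma (1 - α) := Real.Gamma_pos_of_pos h1α
    have hΓ : Real.Gamma (2 - α) = (1 - α) * Real.Gamma (1 - α) := by
      rw [show (2:ℝ) - α = (1 - α) + 1 by ring, Real.Gamma_add_one h1α.ne']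
    set IA := ∫ s in a..x, deriv f s / (x - s) ^ α with hIAdef
    set IB := ∫ s in x..b, deriv f s / (s - x) ^ α with hIBdef
    set DA := IA - deriv f x * (x - a) ^ (1 - α) / (1 - α) with hDA
    set DB := IB - deriv f x * (b - x) ^ (1 - α) / (1 - α) with hDB
    have hLA1 : (x - a) ^ (α - 1) * (x - a) ^ (1 - α) = 1 := by
      rw [← Real.rpow_add hLA]; norm_num
    have hLB1 : (b - x) ^ (α - 1) * (b - x) ^ (1 - α) = 1 := by
      rw [← Real.rpow_add hLB]; norm_num
    have hid : rieszCaputo a b α f x - deriv f x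
        = (1/2) * (1 - α) * ((x - a) ^ (α - 1) * DA + (b - x) ^ (α - 1) * DB) := by
      rw [rieszCaputo, hΓ, hDA, hDB, ← hIAdef, ← hIBdef]
      field_simp
      linear_combination deriv f x * hLA1
        + deriv f x * hLB1
    have hpows : (x - a) ^ (α - 1) * ((x - a) ^ (γ + 1 - α)) = (x - a) ^ γ := by
      rw [← Real.rpow_add hLA]; ring_nf
    have hpowsB : (b - x) ^ (α - 1) * ((b - x) ^ (γ + 1 - α)) = (b - x) ^ γ := by
      rw [← Real.rpow_add hLB]; ring_nf
    rw [hid]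
    have hbound : |(x - a) ^ (α - 1) * DA + (b - x) ^ (α - 1) * DB|
        ≤ C * ((x - a) ^ γ + (b - x) ^ γ) / (γ + 1 - α) := by
      calc |(x - a) ^ (α - 1) * DA + (b - x) ^ (α - 1) * DB|
          ≤ (x - a) ^ (α - 1) * |DA| + (b - x) ^ (α - 1) * |DB| := by
            refine (abs_add_le _ _).trans ?_
            rw [abs_mul, abs_mul, abs_of_nonneg (Real.rpow_nonneg hLA.le _),
              abs_of_nonneg (Real.rpow_nonneg hLB.le _)]
        _ ≤ (x - a) ^ (α - 1) * (C * (x - a) ^ (γ + 1 - α) / (γ + 1 - α))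
            + (b - x) ^ (α - 1) * (C * (b - x) ^ (γ + 1 - α) / (γ + 1 - α)) := by
            gcongr <;>
              first
                | exact Real.rpow_nonneg hLA.le _
                | exact Real.rpow_nonneg hLB.le _
                | exact hIA
                | exact hIB
        _ = C * ((x - a) ^ (α - 1) * ((x - a) ^ (γ + 1 - α))
            + (b - x) ^ (α - 1) * ((b - x) ^ (γ + 1 - α))) / (γ + 1 - α) := by ring
        _ = C * ((x - a) ^ γ + (b - x) ^ γ) / (γ + 1 - α) := by rw [hpows, hpowsB]
    calc |(1/2) * (1 - α) * ((x - a) ^ (α - 1) * DA + (b - x) ^ (α - 1) * DB)|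
        = (1/2) * (1 - α) * |(x - a) ^ (α - 1) * DA + (b - x) ^ (α - 1) * DB| := by
          rw [abs_mul, abs_of_nonneg (by positivity : (0:ℝ) ≤ (1/2) * (1 - α))]
      _ ≤ (1/2) * (1 - α) * (C * ((x - a) ^ γ + (b - x) ^ γ) / (γ + 1 - α)) := by
          gcongr <;> first | exact mul_nonneg (by norm_num) h1α.le | exact hbound
      _ ≤ (1 - α) * K := by
          rw [hK]
          have h1 : C * ((x - a) ^ γ + (b - x) ^ γ) / (γ + 1 - α)
              ≤ C * ((x - a) ^ γ + (b - x) ^ γ) / γ := by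
            gcongr <;> first | positivity | linarith
          calc (1/2) * (1 - α) * (C * ((x - a) ^ γ + (b - x) ^ γ) / (γ + 1 - α))
              ≤ (1/2) * (1 - α) * (C * ((x - a) ^ γ + (b - x) ^ γ) / γ) := by
                gcongr <;> first | exact mul_nonneg (by norm_num) h1α.le | exact h1
            _ = (1 - α) * (C * ((x - a) ^ γ + (b - x) ^ γ) / (2 * γ)) := by ring
  -- conclude
  rw [tendsto_iff_dist_tendsto_zero]
  have hKlim : Tendsto (fun α : ℝ => (1 - α) * K) (nhdsWithin 1 (Set.Iio 1)) (nhds 0) := by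
    have hc : Continuous (fun α : ℝ => (1 - α) * K) :=
      (continuous_const.sub continuous_id).mul continuous_const
    have h := hc.tendsto 1
    simp only [sub_self, zero_mul] at h
    exact h.mono_left nhdsWithin_le_nhds
  refine squeeze_zero' (Eventually.of_forall fun t => dist_nonneg)
    (eventually_of_mem self_mem_nhdsWithin fun α hα => ?_) hKlim
  rw [Real.dist_eq]
  exact key α hα
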